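/- arXiv:1907.02913 — 7 statements merged into one kernel-verified Lean document; each statement's English description precedes it below -/
import Mathlib

section
/- A continuous map f on a compact metric space X has mean ergodic shadowing if and only if for every ε > 0 there exists δ > 0 such that for every δ-ergodic pseudo orbit {x_i} there is a point x in X with d(f^i(x), x_i) < ε for all i in ℕ except a set of upper density less than ε. -/
open Filter Metric

noncomputable def cnt (E : Set ℕ) (n : ℕ) : ℝ :=
  ∑ i ∈ Finset.range n, Set.indicator E (fun _ => (1 : ℝ)) i

def DensityZero (E : Set ℕ) : Prop :=
  Filter.Tendsto (fun n : ℕ => cnt E n / n) Filter.atTop (nhds 0)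

noncomputable def upperDensity (E : Set ℕ) : ℝ :=
  Filter.limsup (fun n : ℕ => cnt E n / n) Filter.atTop

noncomputable def lowerDensity (E : Set ℕ) : ℝ :=
  Filter.liminf (fun n : ℕ => cnt E n / n) Filter.atTop

variable {X : Type*}

def ErgodicPseudoOrbit [MetricSpace X] (f : X → X) (δ : ℝ) (ξ : ℕ → X) : Prop :=
  DensityZero {i | δ ≤ dist (f (ξ i)) (ξ (i + 1))}

def AvgShadows [MetricSpace X] (f : X → X) (ε : ℝ) (p : X) (ξ : ℕ → X) : Prop :=
  Filter.limsup (fun n : ℕ => (∑ i ∈ Finset.range n, dist (f^[i] p) (ξ i)) / n) Filter.atTop < ε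

def MeanErgodicShadowingAvg [MetricSpace X] (f : X → X) : Prop :=
  ∀ ε > 0, ∃ δ > 0, ∀ ξ : ℕ → X, ErgodicPseudoOrbit f δ ξ → ∃ p : X, AvgShadows f ε p ξ

def MeanErgodicShadowingDens [MetricSpace X] (f : X → X) : Prop :=
  ∀ ε > 0, ∃ δ > 0, ∀ ξ : ℕ → X, ErgodicPseudoOrbit f δ ξ →
    ∃ p : X, upperDensity {i | ε ≤ dist (f^[i] p) (ξ i)} < ε

def Shadowing [MetricSpace X] (f : X → X) : Prop :=
  ∀ ε > 0, ∃ δ > 0, ∀ ξ : ℕ → X, (∀ i, dist (f (ξ i)) (ξ (i + 1)) < δ) →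
    ∃ p : X, ∀ i, dist (f^[i] p) (ξ i) < ε

lemma cnt_nonneg (E : Set ℕ) (n : ℕ) : 0 ≤ cnt E n :=
  Finset.sum_nonneg fun i _ => Set.indicator_nonneg (fun _ _ => zero_le_one) i

lemma cnt_le (E : Set ℕ) (n : ℕ) : cnt E n ≤ n := by
  calc cnt E n ≤ ∑ i ∈ Finset.range n, (1 : ℝ) := by
        refine Finset.sum_le_sum fun i _ => ?_
        exact Set.indicator_le_self' (fun _ _ => zero_le_one) i
    _ = n := by simp

theorem stmt0 {X : Type*} [MetricSpace X] [CompactSpace X] (f : X → X) (hf : Continuous f) :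
    MeanErgodicShadowingAvg f ↔ MeanErgodicShadowingDens f := by
  obtain ⟨C, hC⟩ := Metric.isBounded_iff.mp (isCompact_univ (X := X)).isBounded
  set D : ℝ := max C 0 with hD
  have hD0 : 0 ≤ D := le_max_right _ _
  have hdistD : ∀ x y : X, dist x y ≤ D := fun x y =>
    le_trans (hC (Set.mem_univ x) (Set.mem_univ y)) (le_max_left _ _)
  constructor
  · -- Avg → Dens
    intro h ε hε
    obtain ⟨δ, hδ, hsh⟩ := h (ε * ε) (mul_pos hε hε)
    refine ⟨δ, hδ, fun ξ hξ => ?_⟩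
    obtain ⟨p, hp⟩ := hsh ξ hξ
    refine ⟨p, ?_⟩
    set avg : ℕ → ℝ := fun n => (∑ i ∈ Finset.range n, dist (f^[i] p) (ξ i)) / n with havg
    set E : Set ℕ := {i | ε ≤ dist (f^[i] p) (ξ i)} with hE
    have hbdd : IsBoundedUnder (· ≤ ·) atTop avg := by
      refine isBoundedUnder_of ⟨D, fun (n : ℕ) => ?_⟩
      rw [havg]
      rcases Nat.eq_zero_or_pos n with rfl | hn
      · simpa using hD0
      · rw [div_le_iff₀ (by exact_mod_cast hn)]
        calc (∑ i ∈ Finset.range n, dist (f^[i] p) (ξ i))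
            ≤ ∑ i ∈ Finset.range n, D := Finset.sum_le_sum fun i _ => hdistD _ _
          _ = n * D := by rw [Finset.sum_const, Finset.card_range, nsmul_eq_mul]
          _ = D * n := mul_comm _ _
    have hLlt : limsup avg atTop < ε * ε := hp
    have hmax : max (limsup avg atTop) 0 < ε * ε := max_lt hLlt (mul_pos hε hε)
    set b : ℝ := (max (limsup avg atTop) 0 + ε * ε) / 2 with hb
    have hLb : limsup avg atTop < b :=
      lt_of_le_of_lt (le_max_left _ 0) (by rw [hb]; linarith)
    have hbε : b < ε * ε := by rw [hb]; linarith
    have hev : ∀ᶠ n in atTop, avg n < b := eventually_lt_of_limsup_lt hLb hbdd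
    have key : ∀ᶠ n in atTop, cnt E n / n ≤ b / ε := by
      filter_upwards [hev, eventually_gt_atTop 0] with n hn hn0
      have hn0' : (0 : ℝ) < n := by exact_mod_cast hn0
      have h1 : ε * cnt E n ≤ ∑ i ∈ Finset.range n, dist (f^[i] p) (ξ i) := by
        rw [cnt, Finset.mul_sum]
        refine Finset.sum_le_sum fun i _ => ?_
        by_cases hi : i ∈ E
        · rw [Set.indicator_of_mem hi, mul_one]; exact hi
        · rw [Set.indicator_of_notMem hi, mul_zero]; exact dist_nonneg
      have h2 : cnt E n / n ≤ avg n / ε := by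
        rw [havg, div_le_div_iff₀ hn0' hε]
        calc cnt E n * ε = ε * cnt E n := mul_comm _ _
          _ ≤ ∑ i ∈ Finset.range n, dist (f^[i] p) (ξ i) := h1
          _ = (∑ i ∈ Finset.range n, dist (f^[i] p) (ξ i)) / n * n := by
              field_simp
      exact h2.trans (by gcongr)
    have hud : upperDensity E ≤ b / ε := by
      refine limsup_le_of_le ?_ key
      exact isCoboundedUnder_le_of_le atTop fun (n : ℕ) =>
        div_nonneg (cnt_nonneg E n) (by positivity)
    refine lt_of_le_of_lt hud ?_
    rw [div_lt_iff₀ hε]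
    exact hbε
  · -- Dens → Avg
    intro h ε hε
    set ε' : ℝ := ε / (2 * (D + 1)) with hε'def
    have hε' : 0 < ε' := by rw [hε'def]; positivity
    obtain ⟨δ, hδ, hsh⟩ := h ε' hε'
    refine ⟨δ, hδ, fun ξ hξ => ?_⟩
    obtain ⟨p, hp⟩ := hsh ξ hξ
    refine ⟨p, ?_⟩
    set E : Set ℕ := {i | ε' ≤ dist (f^[i] p) (ξ i)} with hE
    have hbdd : IsBoundedUnder (· ≤ ·) atTop (fun n => cnt E n / n) := by
      refine isBoundedUnder_of ⟨1, fun (n : ℕ) => ?_⟩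
      rcases Nat.eq_zero_or_pos n with rfl | hn
      · simp
      · exact div_le_one_of_le₀ (cnt_le E n) (Nat.cast_nonneg n)
    have hev : ∀ᶠ n in atTop, cnt E n / n < ε' := eventually_lt_of_limsup_lt hp hbdd
    have key : ∀ᶠ n in atTop,
        (∑ i ∈ Finset.range n, dist (f^[i] p) (ξ i)) / n ≤ ε' + D * ε' := by
      filter_upwards [hev, eventually_gt_atTop 0] with n hn hn0
      have hn0' : (0 : ℝ) < n := by exact_mod_cast hn0
      have h1 : (∑ i ∈ Finset.range n, dist (f^[i] p) (ξ i)) ≤ n * ε' + D * cnt E n := by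
        have hterm : ∀ i ∈ Finset.range n,
            dist (f^[i] p) (ξ i) ≤ ε' + D * Set.indicator E (fun _ => (1:ℝ)) i := by
          intro i _
          by_cases hi : i ∈ E
          · rw [Set.indicator_of_mem hi, mul_one]
            linarith [hdistD (f^[i] p) (ξ i), hε'.le]
          · rw [Set.indicator_of_notMem hi, mul_zero, add_zero]
            exact le_of_not_ge hi
        calc (∑ i ∈ Finset.range n, dist (f^[i] p) (ξ i))
            ≤ ∑ i ∈ Finset.range n, (ε' + D * Set.indicator E (fun _ => (1:ℝ)) i) :=
              Finset.sum_le_sum hterm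
          _ = n * ε' + D * cnt E n := by
              rw [Finset.sum_add_distrib, Finset.sum_const, Finset.card_range, nsmul_eq_mul,
                ← Finset.mul_sum, cnt]
      rw [div_le_iff₀ hn0']
      have h2 : D * cnt E n ≤ D * (ε' * n) := by
        have : cnt E n ≤ ε' * n := by
          have := (div_le_iff₀ hn0').mp hn.le
          linarith
        exact mul_le_mul_of_nonneg_left this hD0
      calc (∑ i ∈ Finset.range n, dist (f^[i] p) (ξ i)) ≤ n * ε' + D * cnt E n := h1
        _ ≤ n * ε' + D * (ε' * n) := by linarith
        _ = (ε' + D * ε') * n := by ring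
    have hls : limsup (fun n : ℕ => (∑ i ∈ Finset.range n, dist (f^[i] p) (ξ i)) / n) atTop
        ≤ ε' + D * ε' := by
      refine limsup_le_of_le ?_ key
      exact isCoboundedUnder_le_of_le atTop fun (n : ℕ) =>
        div_nonneg (Finset.sum_nonneg fun i _ => dist_nonneg) (by positivity)
    refine lt_of_le_of_lt hls ?_
    have : ε' + D * ε' = ε / 2 := by
      rw [hε'def]; field_simp; ring
    rw [this]
    linarith
end

section
/- If H : X → Y is a homeomorphism between compact metric spaces, f : X → X is continuous, and g = H ∘ f ∘ H⁻¹, then g has mean ergodic shadowing if and only if f has mean ergodic shadowing. -/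
open Filter Metric

variable {X : Type*}

lemma densityZero_mono {E F : Set ℕ} (h : E ⊆ F) (hF : DensityZero F) : DensityZero E := by
  refine squeeze_zero (fun n => ?_) (fun n => ?_) hF
  · apply div_nonneg _ (Nat.cast_nonneg n)
    exact Finset.sum_nonneg fun i _ => Set.indicator_nonneg (fun _ _ => zero_le_one) i
  · have hle : cnt E n ≤ cnt F n :=
      Finset.sum_le_sum fun i _ =>
        Set.indicator_le_indicator_of_subset h (fun _ => zero_le_one) i
    gcongr

lemma conj_iterate {X Y : Type*} [TopologicalSpace X] [TopologicalSpace Y]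
    (f : X → X) (H : X ≃ₜ Y) (p : X) (i : ℕ) :
    (fun y : Y => H (f (H.symm y)))^[i] (H p) = H (f^[i] p) := by
  induction i with
  | zero => simp
  | succ n ih =>
    rw [Function.iterate_succ_apply', ih, Function.iterate_succ_apply']
    simp

lemma mes_conj {X Y : Type*} [MetricSpace X] [CompactSpace X] [MetricSpace Y] [CompactSpace Y]
    (f : X → X) (H : X ≃ₜ Y) (hf : MeanErgodicShadowingAvg f) :
    MeanErgodicShadowingAvg (fun y : Y => H (f (H.symm y))) := by
  intro ε hε
  -- diameter bound on Y
  obtain ⟨C0, hC0⟩ := Metric.isBounded_iff.mp (isCompact_univ (X := Y)).isBounded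
  set C : ℝ := max C0 0 with hC
  have hCpos : 0 ≤ C := le_max_right _ _
  have hCb : ∀ a b : Y, dist a b ≤ C :=
    fun a b => le_trans (hC0 (Set.mem_univ a) (Set.mem_univ b)) (le_max_left _ _)
  -- diameter bound on X
  obtain ⟨D0, hD0⟩ := Metric.isBounded_iff.mp (isCompact_univ (X := X)).isBounded
  have hDb : ∀ a b : X, dist a b ≤ max D0 0 :=
    fun a b => le_trans (hD0 (Set.mem_univ a) (Set.mem_univ b)) (le_max_left _ _)
  -- uniform continuity of H at ε/2
  have hH : UniformContinuous (H : X → Y) :=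
    CompactSpace.uniformContinuous_of_continuous H.continuous
  obtain ⟨η, hη, hHη⟩ := Metric.uniformContinuous_iff.mp hH (ε / 2) (by linarith)
  -- choose ε'
  set ε' : ℝ := ε * η / (2 * (C + 1)) with hε'def
  have hε' : 0 < ε' := by positivity
  obtain ⟨δ', hδ', hfδ'⟩ := hf ε' hε'
  -- uniform continuity of H.symm at δ'
  have hHs : UniformContinuous (H.symm : Y → X) :=
    CompactSpace.uniformContinuous_of_continuous H.symm.continuous
  obtain ⟨δ, hδ, hHδ⟩ := Metric.uniformContinuous_iff.mp hHs δ' hδ'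
  refine ⟨δ, hδ, fun ξ hξ => ?_⟩
  set g : Y → Y := fun y : Y => H (f (H.symm y)) with hg
  set ζ : ℕ → X := fun i => H.symm (ξ i) with hζ
  have hζpo : ErgodicPseudoOrbit f δ' ζ := by
    refine densityZero_mono (F := {i | δ ≤ dist (g (ξ i)) (ξ (i + 1))}) ?_ hξ
    intro i hi
    simp only [Set.mem_setOf_eq] at hi ⊢
    by_contra hlt
    push_neg at hlt
    have := hHδ hlt
    simp only [hg, hζ, Homeomorph.symm_apply_apply] at this
    exact absurd this (not_lt.mpr hi)
  obtain ⟨p, hp⟩ := hfδ' ζ hζpo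
  refine ⟨H p, ?_⟩
  unfold AvgShadows at hp ⊢
  -- pointwise: dist (g^[i] (H p)) (ξ i) ≤ (C/η) * dist (f^[i] p) (ζ i) + ε/2
  have key : ∀ i, dist (g^[i] (H p)) (ξ i) ≤ (C / η) * dist (f^[i] p) (ζ i) + ε / 2 := by
    intro i
    have hiter : g^[i] (H p) = H (f^[i] p) := conj_iterate f H p i
    rw [hiter]
    have hxi : ξ i = H (ζ i) := by simp [hζ]
    rw [hxi]
    rcases lt_or_ge (dist (f^[i] p) (ζ i)) η with hlt | hge
    · have := hHη hlt
      have h0 : 0 ≤ (C / η) * dist (f^[i] p) (ζ i) := by positivity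
      linarith [le_of_lt this]
    · have h1 : dist (H (f^[i] p)) (H (ζ i)) ≤ C := hCb _ _
      have h2 : C ≤ (C / η) * dist (f^[i] p) (ζ i) := by
        rw [div_mul_eq_mul_div, le_div_iff₀ hη]
        nlinarith
      linarith
  -- B eventually < ε'
  have hBbdd : IsBoundedUnder (· ≤ ·) atTop
      (fun n : ℕ => (∑ i ∈ Finset.range n, dist (f^[i] p) (ζ i)) / n) := by
    refine ⟨max D0 0, Filter.eventually_map.mpr (Filter.Eventually.of_forall fun n => ?_)⟩
    rcases Nat.eq_zero_or_pos n with rfl | hn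
    · simp [le_max_right D0 0]
    · rw [div_le_iff₀ (by exact_mod_cast hn)]
      calc ∑ i ∈ Finset.range n, dist (f^[i] p) (ζ i)
          ≤ ∑ _i ∈ Finset.range n, max D0 0 := Finset.sum_le_sum fun i _ => hDb _ _
        _ = max D0 0 * n := by rw [Finset.sum_const, Finset.card_range, nsmul_eq_mul]; ring
  have hBev : ∀ᶠ n in atTop,
      (∑ i ∈ Finset.range n, dist (f^[i] p) (ζ i)) / n < ε' :=
    eventually_lt_of_limsup_lt hp hBbdd
  have hAev : ∀ᶠ n in atTop,
      (∑ i ∈ Finset.range n, dist (g^[i] (H p)) (ξ i)) / n ≤ (C / η) * ε' + ε / 2 := by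
    filter_upwards [hBev, Filter.eventually_gt_atTop 0] with n hBn hn
    have hn' : (0:ℝ) < n := by exact_mod_cast hn
    have hsum : (∑ i ∈ Finset.range n, dist (g^[i] (H p)) (ξ i))
        ≤ (C / η) * (∑ i ∈ Finset.range n, dist (f^[i] p) (ζ i)) + (ε / 2) * n := by
      calc (∑ i ∈ Finset.range n, dist (g^[i] (H p)) (ξ i))
          ≤ ∑ i ∈ Finset.range n, ((C / η) * dist (f^[i] p) (ζ i) + ε / 2) :=
            Finset.sum_le_sum fun i _ => key i
        _ = (C / η) * (∑ i ∈ Finset.range n, dist (f^[i] p) (ζ i)) + (ε / 2) * n := by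
            rw [Finset.sum_add_distrib, ← Finset.mul_sum, Finset.sum_const, Finset.card_range]
            ring
    rw [div_le_iff₀ hn']
    have hB' : (∑ i ∈ Finset.range n, dist (f^[i] p) (ζ i)) ≤ ε' * n := by
      have := hBn
      rw [div_lt_iff₀ hn'] at this
      linarith
    have hCη : 0 ≤ C / η := by positivity
    nlinarith [mul_le_mul_of_nonneg_left hB' hCη]
  have hcobdd : IsCoboundedUnder (· ≤ ·) atTop
      (fun n : ℕ => (∑ i ∈ Finset.range n, dist (g^[i] (H p)) (ξ i)) / n) := by
    refine isCoboundedUnder_le_of_le atTop (x := 0) fun n => ?_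
    positivity
  calc limsup (fun n : ℕ => (∑ i ∈ Finset.range n, dist (g^[i] (H p)) (ξ i)) / n) atTop
      ≤ (C / η) * ε' + ε / 2 := limsup_le_of_le hcobdd hAev
    _ < ε := by
        rw [hε'def]
        have : C / η * (ε * η / (2 * (C + 1))) = (C / (C+1)) * (ε / 2) := by
          field_simp
        rw [this]
        have hfrac : C / (C + 1) < 1 := by
          rw [div_lt_one (by linarith)]; linarith
        nlinarith

theorem stmt1 {X Y : Type*} [MetricSpace X] [CompactSpace X] [MetricSpace Y] [CompactSpace Y]
    (f : X → X) (hf : Continuous f) (H : X ≃ₜ Y) :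
    MeanErgodicShadowingAvg (fun y : Y => H (f (H.symm y))) ↔ MeanErgodicShadowingAvg f := by
  constructor
  · intro hg
    have := mes_conj (fun y : Y => H (f (H.symm y))) H.symm hg
    have heq : (fun x : X => H.symm (H (f (H.symm (H.symm.symm x))))) = f := by
      funext x; simp
    simpa [heq] using this
  · intro hfm
    exact mes_conj f H hfm
end

section
/- If f : X → X and g : Y → Y are continuous maps on compact metric spaces each having mean ergodic shadowing, then the product map f × g on X × Y (with the max metric) has mean ergodic shadowing. -/
open Filter Metric

variable {X : Type*}

lemma div_le_div_of_nonneg_right' {a b c : ℝ} (h : a ≤ b) (hc : 0 ≤ c) : a / c ≤ b / c := by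
  rcases eq_or_lt_of_le hc with rfl | hc
  · simp
  · exact (div_le_div_iff_of_pos_right hc).2 h

lemma cnt_mono {E F : Set ℕ} (h : F ⊆ E) (n : ℕ) : cnt F n ≤ cnt E n :=
  Finset.sum_le_sum fun i _ =>
    Set.indicator_le_indicator_of_subset h (fun _ => zero_le_one) i

lemma DensityZero.mono {E F : Set ℕ} (h : F ⊆ E) (hE : DensityZero E) : DensityZero F := by
  refine squeeze_zero (fun n => div_nonneg (cnt_nonneg F n) (Nat.cast_nonneg n))
    (fun n => ?_) hE
  exact div_le_div_of_nonneg_right' (cnt_mono h n) (Nat.cast_nonneg n)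

theorem stmt2 {X Y : Type*} [MetricSpace X] [CompactSpace X] [MetricSpace Y] [CompactSpace Y]
    (f : X → X) (g : Y → Y) (hf : Continuous f) (hg : Continuous g)
    (h1 : MeanErgodicShadowingAvg f) (h2 : MeanErgodicShadowingAvg g) :
    MeanErgodicShadowingAvg (Prod.map f g) := by
  intro ε hε
  obtain ⟨δ1, hδ1, H1⟩ := h1 (ε / 2) (by positivity)
  obtain ⟨δ2, hδ2, H2⟩ := h2 (ε / 2) (by positivity)
  refine ⟨min δ1 δ2, lt_min hδ1 hδ2, fun ξ hξ => ?_⟩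
  have hx : ErgodicPseudoOrbit f δ1 (fun i => (ξ i).1) := by
    refine DensityZero.mono (fun i hi => ?_) hξ
    simp only [Set.mem_setOf_eq] at hi ⊢
    calc min δ1 δ2 ≤ δ1 := min_le_left _ _
      _ ≤ dist (f (ξ i).1) (ξ (i + 1)).1 := hi
      _ ≤ dist (Prod.map f g (ξ i)) (ξ (i + 1)) := by
          rw [Prod.dist_eq]; exact le_max_left _ _
  have hy : ErgodicPseudoOrbit g δ2 (fun i => (ξ i).2) := by
    refine DensityZero.mono (fun i hi => ?_) hξ
    simp only [Set.mem_setOf_eq] at hi ⊢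
    calc min δ1 δ2 ≤ δ2 := min_le_right _ _
      _ ≤ dist (g (ξ i).2) (ξ (i + 1)).2 := hi
      _ ≤ dist (Prod.map f g (ξ i)) (ξ (i + 1)) := by
          rw [Prod.dist_eq]; exact le_max_right _ _
  obtain ⟨p, hp⟩ := H1 _ hx
  obtain ⟨q, hq⟩ := H2 _ hy
  refine ⟨(p, q), ?_⟩
  unfold AvgShadows at hp hq ⊢
  set ux : ℕ → ℝ := fun n => (∑ i ∈ Finset.range n, dist (f^[i] p) (ξ i).1) / n with hux
  set uy : ℕ → ℝ := fun n => (∑ i ∈ Finset.range n, dist (g^[i] q) (ξ i).2) / n with huy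
  -- bound on distances from compactness
  obtain ⟨Cx, hCx⟩ : ∃ C : ℝ, ∀ a b : X, dist a b ≤ C := by
    obtain ⟨C, hC⟩ := Metric.isBounded_iff.1 (isCompact_univ (X := X)).isBounded
    exact ⟨C, fun a b => hC trivial trivial⟩
  obtain ⟨Cy, hCy⟩ : ∃ C : ℝ, ∀ a b : Y, dist a b ≤ C := by
    obtain ⟨C, hC⟩ := Metric.isBounded_iff.1 (isCompact_univ (X := Y)).isBounded
    exact ⟨C, fun a b => hC trivial trivial⟩
  have hCx0 : 0 ≤ Cx := le_trans dist_nonneg (hCx p p)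
  have hCy0 : 0 ≤ Cy := le_trans dist_nonneg (hCy q q)
  have hux_nonneg : ∀ n, 0 ≤ ux n := fun n =>
    div_nonneg (Finset.sum_nonneg fun _ _ => dist_nonneg) (Nat.cast_nonneg n)
  have huy_nonneg : ∀ n, 0 ≤ uy n := fun n =>
    div_nonneg (Finset.sum_nonneg fun _ _ => dist_nonneg) (Nat.cast_nonneg n)
  have hux_bdd : ∀ n, ux n ≤ Cx := by
    intro n
    rcases Nat.eq_zero_or_pos n with rfl | hn
    · simpa [hux] using hCx0
    · rw [hux, div_le_iff₀ (by exact_mod_cast hn)]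
      calc (∑ i ∈ Finset.range n, dist (f^[i] p) (ξ i).1)
          ≤ ∑ _i ∈ Finset.range n, Cx := Finset.sum_le_sum fun i _ => hCx _ _
        _ = n * Cx := by simp [mul_comm]
        _ = Cx * n := mul_comm _ _
  have huy_bdd : ∀ n, uy n ≤ Cy := by
    intro n
    rcases Nat.eq_zero_or_pos n with rfl | hn
    · simpa [huy] using hCy0
    · rw [huy, div_le_iff₀ (by exact_mod_cast hn)]
      calc (∑ i ∈ Finset.range n, dist (g^[i] q) (ξ i).2)
          ≤ ∑ _i ∈ Finset.range n, Cy := Finset.sum_le_sum fun i _ => hCy _ _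
        _ = n * Cy := by simp [mul_comm]
        _ = Cy * n := mul_comm _ _
  have bx_ge : IsBoundedUnder (· ≥ ·) atTop ux := isBoundedUnder_of ⟨0, hux_nonneg⟩
  have bx_le : IsBoundedUnder (· ≤ ·) atTop ux := isBoundedUnder_of ⟨Cx, hux_bdd⟩
  have by_ge : IsBoundedUnder (· ≥ ·) atTop uy := isBoundedUnder_of ⟨0, huy_nonneg⟩
  have by_le : IsBoundedUnder (· ≤ ·) atTop uy := isBoundedUnder_of ⟨Cy, huy_bdd⟩
  have key : ∀ n : ℕ,
      (∑ i ∈ Finset.range n, dist ((Prod.map f g)^[i] (p, q)) (ξ i)) / n ≤ ux n + uy n := by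
    intro n
    rw [hux, huy, ← add_div]
    refine div_le_div_of_nonneg_right' ?_ (Nat.cast_nonneg n)
    rw [← Finset.sum_add_distrib]
    refine Finset.sum_le_sum fun i _ => ?_
    rw [Prod.map_iterate, Prod.map_apply, Prod.dist_eq]
    exact max_le (le_add_of_nonneg_right dist_nonneg) (le_add_of_nonneg_left dist_nonneg)
  calc limsup (fun n : ℕ =>
        (∑ i ∈ Finset.range n, dist ((Prod.map f g)^[i] (p, q)) (ξ i)) / n) atTop
      ≤ limsup (ux + uy) atTop := by
        refine limsup_le_limsup (Eventually.of_forall key) ?_ ?_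
        · exact IsBoundedUnder.isCoboundedUnder_le
            (isBoundedUnder_of ⟨0, fun n => div_nonneg
              (Finset.sum_nonneg fun _ _ => dist_nonneg) (Nat.cast_nonneg n)⟩)
        · exact isBoundedUnder_of ⟨Cx + Cy, fun n => add_le_add (hux_bdd n) (huy_bdd n)⟩
      _ ≤ limsup ux atTop + limsup uy atTop := limsup_add_le bx_ge bx_le
          (by_ge.isCoboundedUnder_le) by_le
      _ < ε / 2 + ε / 2 := add_lt_add hp hq
      _ = ε := add_halves ε
end

section
/- If a continuous map f on a compact metric space has mean ergodic shadowing, then for every integer k > 1 the iterate f^k has mean ergodic shadowing. -/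
open Filter Metric

variable {X : Type*}

open Classical in
lemma cnt_eq_card (E : Set ℕ) (n : ℕ) :
    cnt E n = ((Finset.range n).filter (· ∈ E)).card := by
  classical
  simp [cnt, Set.indicator_apply, Finset.sum_boole]

lemma densityZero_of_le {B E : Set ℕ} (hE : DensityZero E)
    (hle : ∀ n, cnt B n ≤ cnt E n) : DensityZero B := by
  apply squeeze_zero (fun n => div_nonneg (cnt_nonneg B n) (Nat.cast_nonneg n)) _ hE
  intro n
  rw [div_eq_mul_inv, div_eq_mul_inv]
  exact mul_le_mul_of_nonneg_right (hle n) (by positivity)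

theorem stmt3 {X : Type*} [MetricSpace X] [CompactSpace X] (f : X → X) (hf : Continuous f)
    (h : MeanErgodicShadowingAvg f) :
    ∀ k : ℕ, 1 < k → MeanErgodicShadowingAvg (f^[k]) := by
  classical
  intro k hk ε hε
  have hk0 : 0 < k := by omega
  have hkR : (0:ℝ) < k := by exact_mod_cast hk0
  obtain ⟨δ, hδ, hδ'⟩ := h (ε / k) (by positivity)
  refine ⟨δ, hδ, ?_⟩
  intro ξ hξ
  -- interleaved pseudo-orbit for f
  set y : ℕ → X := fun i => f^[i % k] (ξ (i / k)) with hy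
  -- bad sets
  set E : Set ℕ := {j | δ ≤ dist (f^[k] (ξ j)) (ξ (j + 1))} with hE
  set B : Set ℕ := {i | δ ≤ dist (f (y i)) (y (i + 1))} with hB
  -- structure of y's defect
  have hmem : ∀ i, i ∈ B → i % k = k - 1 ∧ i / k ∈ E := by
    intro i hi
    have hik : i % k < k := Nat.mod_lt _ hk0
    have hrep : k * (i / k) + i % k = i := Nat.div_add_mod i k
    by_cases hc : i % k + 1 < k
    · exfalso
      have h1 : (i + 1) % k = i % k + 1 := by
        conv_lhs => rw [← hrep]
        rw [add_assoc, Nat.mul_add_mod]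
        exact Nat.mod_eq_of_lt hc
      have h2 : (i + 1) / k = i / k := by
        conv_lhs => rw [← hrep]
        rw [add_assoc, Nat.mul_add_div hk0, Nat.div_eq_of_lt hc, add_zero]
      have : f (y i) = y (i + 1) := by
        simp only [hy, h1, h2, ← Function.iterate_succ_apply' f (i % k)]
      rw [hB, Set.mem_setOf_eq, this, dist_self] at hi
      linarith
    · have hkm : i % k = k - 1 := by omega
      have hsum : i % k + 1 = k := by omega
      have h1 : (i + 1) % k = 0 := by
        conv_lhs => rw [← hrep]
        rw [add_assoc, hsum, Nat.mul_add_mod, Nat.mod_self]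
      have h2 : (i + 1) / k = i / k + 1 := by
        conv_lhs => rw [← hrep]
        rw [add_assoc, hsum, Nat.mul_add_div hk0, Nat.div_self hk0]
      have hfy : f (y i) = f^[k] (ξ (i / k)) := by
        rw [hy]
        simp only [← Function.iterate_succ_apply' f (i % k)]
        rw [Nat.succ_eq_add_one, hsum]
      have hynext : y (i + 1) = ξ (i / k + 1) := by
        simp [hy, h1, h2]
      rw [hB, Set.mem_setOf_eq, hfy, hynext] at hi
      exact ⟨hkm, hi⟩
  -- counting comparison
  have hcnt : ∀ n, cnt B n ≤ cnt E n := by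
    intro n
    rw [cnt_eq_card, cnt_eq_card]
    have : ((Finset.range n).filter (· ∈ B)).card ≤
        ((Finset.range n).filter (· ∈ E)).card := by
      apply Finset.card_le_card_of_injOn (fun i => i / k)
      · intro i hi
        simp only [Finset.mem_coe, Finset.mem_filter, Finset.mem_range] at hi ⊢
        exact ⟨lt_of_le_of_lt (Nat.div_le_self i k) hi.1, (hmem i hi.2).2⟩
      · intro i hi j hj hij
        simp only [Finset.coe_filter, Set.mem_setOf_eq, Finset.mem_range] at hi hj
        have h1 := (hmem i hi.2).1
        have h2 := (hmem j hj.2).1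
        have ri : k * (i / k) + i % k = i := Nat.div_add_mod i k
        have rj : k * (j / k) + j % k = j := Nat.div_add_mod j k
        have hij' : i / k = j / k := hij
        rw [hij'] at ri
        omega
    exact_mod_cast this
  have hyergo : ErgodicPseudoOrbit f δ y := densityZero_of_le hξ hcnt
  obtain ⟨p, hp⟩ := hδ' y hyergo
  refine ⟨p, ?_⟩
  -- global distance bound (compactness)
  have hCb : ∃ C : ℝ, ∀ x z : X, dist x z ≤ C := by
    obtain ⟨C, hC⟩ := Metric.isBounded_iff.1 (isCompact_univ (X := X)).isBounded
    exact ⟨C, fun x z => hC (Set.mem_univ x) (Set.mem_univ z)⟩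
  obtain ⟨C, hC⟩ := hCb
  set A : ℕ → ℝ := fun n => (∑ i ∈ Finset.range n, dist (f^[i] p) (y i)) / n with hA
  have hAnn : ∀ n, 0 ≤ A n := fun n => by
    apply div_nonneg (Finset.sum_nonneg fun i _ => dist_nonneg) (Nat.cast_nonneg n)
  have hAbd : ∀ n, A n ≤ max C 0 := by
    intro n
    rcases Nat.eq_zero_or_pos n with rfl | hn
    · simp [hA, le_max_right]
    · rw [hA, div_le_iff₀ (by exact_mod_cast hn)]
      calc ∑ i ∈ Finset.range n, dist (f^[i] p) (y i)
          ≤ ∑ _i ∈ Finset.range n, max C 0 :=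
            Finset.sum_le_sum fun i _ => le_trans (hC _ _) (le_max_left _ _)
        _ = n * max C 0 := by simp [mul_comm]
        _ = max C 0 * n := by ring
  have hlim : Filter.limsup A Filter.atTop < ε / k := hp
  obtain ⟨c, hc1, hc2⟩ := exists_between hlim
  have hev : ∀ᶠ n in Filter.atTop, A n < c :=
    Filter.eventually_lt_of_limsup_lt hc1 ⟨max C 0, Filter.eventually_atTop.2 ⟨0, fun n _ => hAbd n⟩⟩
  obtain ⟨N, hN⟩ := Filter.eventually_atTop.1 hev
  -- the average for f^[k]
  set Bv : ℕ → ℝ := fun j => (∑ i ∈ Finset.range j, dist ((f^[k])^[i] p) (ξ i)) / j with hBv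
  have hBvnn : ∀ j, 0 ≤ Bv j := fun j =>
    div_nonneg (Finset.sum_nonneg fun i _ => dist_nonneg) (Nat.cast_nonneg j)
  have key : ∀ j, 1 ≤ j → Bv j ≤ k * A (k * j) := by
    intro j hj
    have hjR : (0:ℝ) < j := by exact_mod_cast hj
    have hsum : (∑ i ∈ Finset.range j, dist ((f^[k])^[i] p) (ξ i)) ≤
        ∑ m ∈ Finset.range (k * j), dist (f^[m] p) (y m) := by
      have e1 : ∀ i, dist ((f^[k])^[i] p) (ξ i) = dist (f^[k * i] p) (y (k * i)) := by
        intro i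
        have : y (k * i) = ξ i := by
          simp [hy, Nat.mul_mod_right, Nat.mul_div_cancel_left i hk0]
        rw [this, Function.iterate_mul]
      calc (∑ i ∈ Finset.range j, dist ((f^[k])^[i] p) (ξ i))
          = ∑ i ∈ Finset.range j, dist (f^[k * i] p) (y (k * i)) := by
            exact Finset.sum_congr rfl fun i _ => e1 i
        _ = ∑ m ∈ (Finset.range j).image (k * ·), dist (f^[m] p) (y m) := by
            rw [Finset.sum_image]
            intro a _ b _ hab
            exact Nat.eq_of_mul_eq_mul_left hk0 hab
        _ ≤ ∑ m ∈ Finset.range (k * j), dist (f^[m] p) (y m) := by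
            apply Finset.sum_le_sum_of_subset_of_nonneg
            · intro m hm
              simp only [Finset.mem_image, Finset.mem_range] at hm ⊢
              obtain ⟨a, ha, rfl⟩ := hm
              exact (Nat.mul_lt_mul_left hk0).2 ha
            · intro m _ _; exact dist_nonneg
    rw [hBv, hA, div_le_iff₀ hjR]
    have hkj : ((k * j : ℕ) : ℝ) = (k : ℝ) * j := by push_cast; ring
    calc (∑ i ∈ Finset.range j, dist ((f^[k])^[i] p) (ξ i))
        ≤ ∑ m ∈ Finset.range (k * j), dist (f^[m] p) (y m) := hsum
      _ = (k : ℝ) * ((∑ m ∈ Finset.range (k * j), dist (f^[m] p) (y m)) / (k * j : ℕ)) * j := by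
          rw [hkj]; field_simp
  have hevB : ∀ᶠ j in Filter.atTop, Bv j ≤ k * c := by
    refine Filter.eventually_atTop.2 ⟨max 1 N, fun j hj => ?_⟩
    have hj1 : 1 ≤ j := le_trans (le_max_left _ _) hj
    have hjN : N ≤ k * j := le_trans (le_trans (le_max_right _ _) hj) (Nat.le_mul_of_pos_left j hk0)
    calc Bv j ≤ k * A (k * j) := key j hj1
      _ ≤ k * c := mul_le_mul_of_nonneg_left (le_of_lt (hN _ hjN)) (le_of_lt hkR)
  have : Filter.limsup Bv Filter.atTop ≤ k * c :=
    Filter.limsup_le_of_le (Filter.isCoboundedUnder_le_of_le Filter.atTop hBvnn) hevB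
  calc Filter.limsup Bv Filter.atTop ≤ k * c := this
    _ < k * (ε / k) := by
        exact mul_lt_mul_of_pos_left hc2 hkR
    _ = ε := by field_simp
end

section
/- If a continuous map f on a compact metric space has ergodic shadowing, then f has mean ergodic shadowing. -/
open Filter Metric

variable {X : Type*}

def ErgodicShadowing [MetricSpace X] (f : X → X) : Prop :=
  ∀ ε > 0, ∃ δ > 0, ∀ ξ : ℕ → X, ErgodicPseudoOrbit f δ ξ →
    ∃ p : X, DensityZero {i | ε ≤ dist (f^[i] p) (ξ i)}

theorem stmt6 {X : Type*} [MetricSpace X] [CompactSpace X] (f : X → X) (hf : Continuous f)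
    (h : ErgodicShadowing f) : MeanErgodicShadowingAvg f := by
  intro ε hε
  obtain ⟨δ, hδ, hsh⟩ := h (ε / 2) (by linarith)
  refine ⟨δ, hδ, fun ξ hξ => ?_⟩
  obtain ⟨p, hp⟩ := hsh ξ hξ
  refine ⟨p, ?_⟩
  set D := Metric.diam (Set.univ : Set X) with hDdef
  have hD : 0 ≤ D := Metric.diam_nonneg
  have hdist : ∀ x y : X, dist x y ≤ D := fun x y =>
    Metric.dist_le_diam_of_mem isCompact_univ.isBounded trivial trivial
  set E := {i | ε / 2 ≤ dist (f^[i] p) (ξ i)} with hE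
  have key : ∀ n : ℕ, (∑ i ∈ Finset.range n, dist (f^[i] p) (ξ i)) / n
      ≤ ε / 2 + D * (cnt E n / n) := by
    intro n
    rcases Nat.eq_zero_or_pos n with rfl | hn
    · simp [cnt]; linarith
    have hsum : (∑ i ∈ Finset.range n, dist (f^[i] p) (ξ i)) ≤
        ∑ i ∈ Finset.range n, (ε / 2 + D * Set.indicator E (fun _ => (1 : ℝ)) i) := by
      apply Finset.sum_le_sum
      intro i _
      by_cases hi : i ∈ E
      · have h1 : dist (f^[i] p) (ξ i) ≤ D := hdist _ _
        rw [Set.indicator_of_mem hi]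
        linarith
      · have h1 : dist (f^[i] p) (ξ i) < ε / 2 := lt_of_not_ge hi
        rw [Set.indicator_of_notMem hi]
        linarith
    have hn' : (0 : ℝ) < n := by exact_mod_cast hn
    rw [div_le_iff₀ hn']
    calc (∑ i ∈ Finset.range n, dist (f^[i] p) (ξ i))
        ≤ ∑ i ∈ Finset.range n, (ε / 2 + D * Set.indicator E (fun _ => (1 : ℝ)) i) := hsum
      _ = n * (ε / 2) + D * cnt E n := by
          rw [Finset.sum_add_distrib, ← Finset.mul_sum]
          simp [cnt, mul_comm]
      _ = (ε / 2 + D * (cnt E n / n)) * n := by field_simp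
  have htend : Tendsto (fun n : ℕ => D * (cnt E n / n)) atTop (nhds 0) := by
    simpa using hp.const_mul D
  have hsmall : ∀ᶠ n in atTop, D * (cnt E n / n) < ε / 4 :=
    htend.eventually (gt_mem_nhds (show (0 : ℝ) < ε / 4 by linarith))
  have hev : ∀ᶠ n in atTop,
      (∑ i ∈ Finset.range n, dist (f^[i] p) (ξ i)) / n ≤ ε / 2 + ε / 4 := by
    filter_upwards [hsmall] with n hn
    have := key n
    linarith
  have hcb : Filter.IsCoboundedUnder (· ≤ ·) Filter.atTop
      (fun n : ℕ => (∑ i ∈ Finset.range n, dist (f^[i] p) (ξ i)) / n) := by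
    apply Filter.isCoboundedUnder_le_of_le (x := 0) Filter.atTop
    intro n
    positivity
  have hfin := Filter.limsup_le_of_le hcb hev
  exact lt_of_le_of_lt hfin (by linarith)
end

section
/- If a continuous map f on a compact metric space is chain transitive and has shadowing, then f is (topologically) transitive. -/
open Filter Metric

variable {X : Type*}

def ChainTransitive [MetricSpace X] (f : X → X) : Prop :=
  ∀ ε > 0, ∀ x y : X, ∃ n : ℕ, ∃ c : ℕ → X, c 0 = x ∧ c n = y ∧
    ∀ i < n, dist (f (c i)) (c (i + 1)) < ε

def TopTransitive [TopologicalSpace X] (f : X → X) : Prop :=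
  ∀ U V : Set X, IsOpen U → IsOpen V → U.Nonempty → V.Nonempty →
    ∃ n ≥ 1, (f^[n] '' U ∩ V).Nonempty

theorem stmt9 {X : Type*} [MetricSpace X] [CompactSpace X] (f : X → X) (hf : Continuous f)
    (hct : ChainTransitive f) (hs : Shadowing f) : TopTransitive f := by
  intro U V hU hV ⟨x, hx⟩ ⟨y, hy⟩
  obtain ⟨ε₁, hε₁, hball₁⟩ := Metric.isOpen_iff.mp hU x hx
  obtain ⟨ε₂, hε₂, hball₂⟩ := Metric.isOpen_iff.mp hV y hy
  have hε : (0:ℝ) < min ε₁ ε₂ := lt_min hε₁ hε₂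
  obtain ⟨δ, hδ, hδs⟩ := hs (min ε₁ ε₂) hε
  obtain ⟨m, c, hc0, hcm, hchain⟩ := hct δ hδ (f x) y
  set ξ : ℕ → X := fun i => match i with
    | 0 => x
    | Nat.succ j => if j ≤ m then c j else f^[j - m] y with hξ
  have hpo : ∀ i, dist (f (ξ i)) (ξ (i + 1)) < δ := by
    intro i
    match i with
    | 0 =>
      have h1 : ξ 1 = c 0 := by simp [hξ]
      simp [hξ, h1, hc0, hδ]
    | Nat.succ j =>
      rcases lt_trichotomy j m with h | h | h
      · have h1 : ξ (j+1) = c j := by simp [hξ, h.le]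
        have h2 : ξ (j+2) = c (j+1) := by simp [hξ, Nat.succ_le_of_lt h]
        rw [h1, h2]; exact hchain j h
      · subst h
        have h1 : ξ (j+1) = y := by simp [hξ, hcm]
        have h2 : ξ (j+2) = f y := by
          simp [hξ, Nat.lt_irrefl]
        rw [h1, h2]; simpa using hδ
      · have h1 : ξ (j+1) = f^[j - m] y := by simp [hξ, Nat.not_le.mpr h]
        have h2 : ξ (j+2) = f^[j + 1 - m] y := by
          simp [hξ, Nat.not_le.mpr (Nat.lt_succ_of_lt h)]
        have h3 : j + 1 - m = (j - m) + 1 := by omega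
        rw [h1, h2, h3, Function.iterate_succ_apply']
        simpa using hδ
  obtain ⟨p, hp⟩ := hδs ξ hpo
  refine ⟨m + 1, Nat.le_add_left 1 m, f^[m+1] p, ⟨p, ?_, rfl⟩, ?_⟩
  · apply hball₁
    have := hp 0
    simp only [Function.iterate_zero_apply] at this
    have hξ0 : ξ 0 = x := rfl
    rw [hξ0] at this
    exact Metric.mem_ball.mpr (lt_of_lt_of_le this (min_le_left _ _))
  · apply hball₂
    have := hp (m + 1)
    have hξm : ξ (m + 1) = y := by simp [hξ, hcm]
    rw [hξm] at this
    exact Metric.mem_ball.mpr (lt_of_lt_of_le this (min_le_right _ _))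
end

section
/- Let X = C₁ ∪ C₂ be the disjoint union of two circles and f : X → X the map exchanging the circles, sending a point of angle θ on C₁ to the point of angle 2θ on C₂ and vice versa. Then f² is not chain transitive. -/
open Filter Metric

variable {X : Type*}

attribute [local instance] Metric.metricSpaceSum

/-- The map exchanging two copies of the circle, doubling the angle. -/
noncomputable def circleExchange : Circle ⊕ Circle → Circle ⊕ Circle :=
  Sum.elim (fun z => Sum.inr (z * z)) (fun z => Sum.inl (z * z))


lemma circleExchange_sq (z : Circle) :
    (circleExchange^[2]) (Sum.inl z) = Sum.inl ((z * z) * (z * z)) := by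
  simp [Function.iterate_succ, circleExchange]

theorem stmt11 : ¬ ChainTransitive (circleExchange^[2]) := by
  intro h
  obtain ⟨n, c, h0, hn, hstep⟩ := h (1/2) (by norm_num) (Sum.inl 1) (Sum.inr 1)
  have key : ∀ i ≤ n, ∃ z, c i = Sum.inl z := by
    intro i hi
    induction i with
    | zero => exact ⟨1, h0⟩
    | succ k ih =>
      obtain ⟨z, hz⟩ := ih (Nat.le_of_succ_le hi)
      have hd := hstep k (Nat.lt_of_succ_le hi)
      rw [hz, circleExchange_sq] at hd
      cases hck : c (k + 1) with
      | inl w => exact ⟨w, rfl⟩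
      | inr w =>
        rw [hck] at hd
        have := Sum.one_le_dist_inl_inr (x := (z * z) * (z * z)) (y := w)
        have : (1:ℝ) ≤ dist (Sum.inl ((z*z)*(z*z)) : Circle ⊕ Circle) (Sum.inr w) := this
        linarith
  obtain ⟨z, hz⟩ := key n le_rfl
  rw [hn] at hz
  exact Sum.inr_ne_inl hz
end
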